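/- The uncertainty coverage function is submodular: for finite sets A ⊆ B ⊆ X and any point x̃ ∈ X, UC(A ∪ {x̃}) - UC(A) ≥ UC(B ∪ {x̃}) - UC(B). -/

import Mathlib

noncomputable def maxOr0 {X : Type*} (S : Finset X) (f : X → ℝ) : ℝ :=
  WithBot.unbotD 0 (S.sup fun x => ((f x : ℝ) : WithBot ℝ))

noncomputable def UC {X : Type*} {N : ℕ} (x : Fin N → X) (U : X → ℝ)
    (k : X → X → ℝ) (S : Finset X) : ℝ :=
  (1 / (N : ℝ)) * ∑ n : Fin N, U (x n) * maxOr0 S (k (x n))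

lemma maxOr0_union_singleton {X : Type*} [DecidableEq X] (S : Finset X) (f : X → ℝ)
    (xt : X) (hf : 0 ≤ f xt) :
    maxOr0 (S ∪ {xt}) f = max (maxOr0 S f) (f xt) := by
  unfold maxOr0
  rw [Finset.sup_union, Finset.sup_singleton]
  cases h : S.sup (fun x => ((f x : ℝ) : WithBot ℝ)) with
  | bot => simp [hf]
  | coe r =>
    have : ((r : WithBot ℝ) ⊔ (f xt : WithBot ℝ)) = ((max r (f xt) : ℝ) : WithBot ℝ) := by
      norm_cast
    rw [this, WithBot.unbotD_coe, WithBot.unbotD_coe]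

lemma maxOr0_mono {X : Type*} (A B : Finset X) (hAB : A ⊆ B) (f : X → ℝ)
    (hf : ∀ a, 0 ≤ f a) :
    maxOr0 A f ≤ maxOr0 B f := by
  unfold maxOr0
  have h := Finset.sup_mono (f := fun x => ((f x : ℝ) : WithBot ℝ)) hAB
  cases hA : A.sup (fun x => ((f x : ℝ) : WithBot ℝ)) with
  | bot => cases hB : B.sup (fun x => ((f x : ℝ) : WithBot ℝ)) with
    | bot => simp
    | coe r =>
      simp only [WithBot.unbotD_bot, WithBot.unbotD_coe]
      have hBne : B.Nonempty := Finset.nonempty_iff_ne_empty.2 (by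
        rintro rfl; simp at hB)
      obtain ⟨a, ha, hfa⟩ := Finset.exists_mem_eq_sup B hBne
        (fun x => ((f x : ℝ) : WithBot ℝ))
      rw [hB] at hfa
      have : r = f a := by exact_mod_cast hfa
      rw [this]; exact hf a
  | coe r =>
    rw [hA] at h
    cases hB : B.sup (fun x => ((f x : ℝ) : WithBot ℝ)) with
    | bot => rw [hB] at h; simp at h
    | coe s =>
      rw [hB] at h
      simpa using h

theorem uc_submodular {X : Type*} [DecidableEq X] {N : ℕ} (hN : 0 < N)
    (x : Fin N → X) (U : X → ℝ) (hU : ∀ a, 0 ≤ U a)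
    (k : X → X → ℝ) (hk : ∀ a b, 0 ≤ k a b)
    (A B : Finset X) (hAB : A ⊆ B) (xt : X) :
    UC x U k (B ∪ {xt}) - UC x U k B ≤ UC x U k (A ∪ {xt}) - UC x U k A := by
  unfold UC
  rw [← mul_sub, ← mul_sub, ← Finset.sum_sub_distrib, ← Finset.sum_sub_distrib]
  apply mul_le_mul_of_nonneg_left _ (by positivity)
  apply Finset.sum_le_sum
  intro n _
  rw [← mul_sub, ← mul_sub]
  apply mul_le_mul_of_nonneg_left _ (hU _)
  rw [maxOr0_union_singleton _ _ _ (hk _ _), maxOr0_union_singleton _ _ _ (hk _ _)]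
  have hm := maxOr0_mono A B hAB (k (x n)) (hk _)
  rcases le_total (k (x n) xt) (maxOr0 A (k (x n))) with h | h
  · rw [max_eq_left h, max_eq_left (h.trans hm)]; simp
  · rw [max_eq_right h]
    rcases le_total (k (x n) xt) (maxOr0 B (k (x n))) with h2 | h2
    · rw [max_eq_left h2]; linarith
    · rw [max_eq_right h2]; linarith
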